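/- Conditional mean of counterfactual outcomes: Assume no unmeasured confounding. Then for every b ∈ Fin m, π(b|X)·E[f(X, b, U) | σ(X)] = π(b|X)·μ(b, X) P-a.s. In particular, if π(b|X) > 0 P-a.s., then E[f(X, b, U) | σ(X)] = μ(b, X) P-a.s.; that is, the outcome regression μ(b, X) is a version of the conditional mean of the counterfactual outcome Y(b) given X. -/

import Mathlib

open MeasureTheory ProbabilityTheory
open scoped ENNReal NNReal

/-- Conditional mean of counterfactual outcomes: under no unmeasured confounding,
`π(b|X) · E[f(X, b, U) | σ(X)] = π(b|X) · μ(b, X)` almost surely; in particular, if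
`π(b|X) > 0` a.s., then `μ(b, X)` is a version of `E[f(X, b, U) | σ(X)]`. -/
theorem condMean_counterfactual
    {Ω 𝒳 𝒰 : Type*} [MeasurableSpace Ω] [StandardBorelSpace Ω]
    [MeasurableSpace 𝒳] [StandardBorelSpace 𝒳]
    [MeasurableSpace 𝒰] [StandardBorelSpace 𝒰]
    (P : Measure Ω) [IsProbabilityMeasure P]
    (m : ℕ) (hm : 1 ≤ m)
    (X : Ω → 𝒳) (U : Ω → 𝒰) (A : Ω → Fin m)
    (hX : Measurable X) (hU : Measurable U) (hA : Measurable A)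
    (f : 𝒳 → Fin m → 𝒰 → ℝ)
    (hf : Measurable fun p : 𝒳 × Fin m × 𝒰 => f p.1 p.2.1 p.2.2)
    (C : ℝ) (hfbdd : ∀ x b u, |f x b u| ≤ C)
    -- propensity scores: π(b|X) is a version of E[1{A=b} | σ(X)]
    (π : Fin m → 𝒳 → ℝ) (hπmeas : ∀ b, Measurable (π b))
    (hπ01 : ∀ b x, 0 ≤ π b x ∧ π b x ≤ 1)
    (hπ : ∀ b, (fun ω => π b (X ω)) =ᵐ[P]
      P[fun ω => (if A ω = b then (1 : ℝ) else 0) | MeasurableSpace.comap X inferInstance])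
    -- outcome regression: μ(b,X)·π(b|X) is a version of E[1{A=b}·Y | σ(X)]
    (μreg : Fin m → 𝒳 → ℝ) (hμmeas : ∀ b, Measurable (μreg b))
    (Cμ : ℝ) (hμbdd : ∀ b x, |μreg b x| ≤ Cμ)
    (hμ : ∀ b, (fun ω => μreg b (X ω) * π b (X ω)) =ᵐ[P]
      P[fun ω => (if A ω = b then (1 : ℝ) else 0) * f (X ω) (A ω) (U ω) |
        MeasurableSpace.comap X inferInstance])
    -- no unmeasured confounding: A ⫫ U | σ(X)
    (hNUC : CondIndepFun (MeasurableSpace.comap X inferInstance) hX.comap_le A U P) :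
    (∀ b : Fin m,
      (fun ω => π b (X ω) *
          (P[fun ω' => f (X ω') b (U ω') | MeasurableSpace.comap X inferInstance]) ω)
        =ᵐ[P] (fun ω => π b (X ω) * μreg b (X ω)))
    ∧ (∀ b : Fin m, (∀ᵐ ω ∂P, 0 < π b (X ω)) →
        P[fun ω' => f (X ω') b (U ω') | MeasurableSpace.comap X inferInstance]
          =ᵐ[P] (fun ω => μreg b (X ω))) := by
  classical
  have hm' : MeasurableSpace.comap X inferInstance ≤ ‹MeasurableSpace Ω› := hX.comap_le
  have hle : MeasurableSpace.comap (fun ω => (X ω, U ω)) inferInstance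
      ≤ ‹MeasurableSpace Ω› := (hX.prodMk hU).comap_le
  have hXm' : Measurable[MeasurableSpace.comap X inferInstance] X := fun s hs => ⟨s, hs, rfl⟩
  have hWm'' : Measurable[MeasurableSpace.comap (fun ω => (X ω, U ω)) inferInstance]
      (fun ω => (X ω, U ω)) := fun s hs => ⟨s, hs, rfl⟩
  have hπsm : ∀ b, StronglyMeasurable[MeasurableSpace.comap X inferInstance]
      (fun ω => π b (X ω)) := fun b => ((hπmeas b).comp hXm').stronglyMeasurable
  have hπnorm : ∀ b, ∀ ω, ‖π b (X ω)‖ ≤ 1 := by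
    intro b ω
    rw [Real.norm_eq_abs, abs_le]
    exact ⟨by linarith [(hπ01 b (X ω)).1], (hπ01 b (X ω)).2⟩
  -- nonemptiness and C ≥ 0
  have hΩne : Nonempty Ω := by
    by_contra h
    rw [not_nonempty_iff] at h
    have h1 := measure_univ (μ := P)
    rw [Set.univ_eq_empty_iff.mpr h, measure_empty] at h1
    exact zero_ne_one h1
  obtain ⟨ω₀⟩ := hΩne
  have hC0 : 0 ≤ C := (abs_nonneg _).trans (hfbdd (X ω₀) ⟨0, hm⟩ (U ω₀))
  suffices key : ∀ b : Fin m,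
      (fun ω => π b (X ω) *
        (P[fun ω' => f (X ω') b (U ω') | MeasurableSpace.comap X inferInstance]) ω)
        =ᵐ[P] fun ω => π b (X ω) * μreg b (X ω) by
    refine ⟨key, fun b hpos => ?_⟩
    filter_upwards [key b, hpos] with ω h1 h2
    exact mul_left_cancel₀ (ne_of_gt h2) h1
  intro b
  set g : Ω → ℝ := fun ω => f (X ω) b (U ω) with hg_def
  have hgmeas : Measurable g := hf.comp (hX.prodMk (measurable_const.prodMk hU))
  have hgsm'' : StronglyMeasurable[MeasurableSpace.comap (fun ω => (X ω, U ω)) inferInstance] g :=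
    ((hf.comp (measurable_fst.prodMk (measurable_const.prodMk measurable_snd))).comp
      hWm'').stronglyMeasurable
  have hgint : Integrable g P := by
    refine Integrable.mono' (integrable_const C) hgmeas.aestronglyMeasurable ?_
    exact Filter.Eventually.of_forall fun ω => by
      simpa [Real.norm_eq_abs] using hfbdd (X ω) b (U ω)
  have hAb : MeasurableSet (A ⁻¹' {b}) := hA (measurableSet_singleton b)
  -- Key: ∀ S ∈ σ(X), ∫_S 1{A=b}·g dP = ∫_S π·g dP
  have key_int : ∀ S : Set Ω, MeasurableSet[MeasurableSpace.comap X inferInstance] S →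
      ∫ ω in S, (if A ω = b then (1 : ℝ) else 0) * g ω ∂P
        = ∫ ω in S, π b (X ω) * g ω ∂P := by
    intro S hSm'
    have hS : MeasurableSet S := hm' S hSm'
    set dens : Ω → ℝ≥0 := fun ω => Real.toNNReal (π b (X ω)) with hdens_def
    have hdensm : Measurable dens := ((hπmeas b).comp hX).real_toNNReal
    set ν₁ : Measure Ω := P.restrict (S ∩ A ⁻¹' {b}) with hν₁_def
    set ν₂ : Measure Ω := (P.restrict S).withDensity (fun ω => (dens ω : ℝ≥0∞)) with hν₂_def
    haveI hfin2 : IsFiniteMeasure ν₂ := by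
      constructor
      have h1 : ν₂ Set.univ = ∫⁻ ω, (dens ω : ℝ≥0∞) ∂(P.restrict S) := by
        rw [hν₂_def, withDensity_apply _ MeasurableSet.univ, Measure.restrict_univ]
      rw [h1]
      calc ∫⁻ ω, (dens ω : ℝ≥0∞) ∂(P.restrict S)
          ≤ ∫⁻ _, 1 ∂(P.restrict S) := by
            refine lintegral_mono fun ω => ?_
            simp only [ENNReal.coe_le_one_iff, hdens_def]
            exact Real.toNNReal_le_one.mpr (hπ01 b (X ω)).2
        _ = P.restrict S Set.univ := lintegral_one
        _ < ⊤ := measure_lt_top _ _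
    -- measures agree on rectangles
    have hrect : ∀ s t, MeasurableSet s → MeasurableSet t →
        ν₁ ((fun ω => (X ω, U ω)) ⁻¹' s ×ˢ t) = ν₂ ((fun ω => (X ω, U ω)) ⁻¹' s ×ˢ t) := by
      intro s t hs ht
      rw [Set.mk_preimage_prod]
      set S' : Set Ω := S ∩ X ⁻¹' s with hS'_def
      have hS'm' : MeasurableSet[MeasurableSpace.comap X inferInstance] S' :=
        hSm'.inter ⟨s, hs, rfl⟩
      have hUt : MeasurableSet (U ⁻¹' t) := hU ht
      have hind1 : Integrable ((A ⁻¹' {b} ∩ U ⁻¹' t).indicator fun _ => (1 : ℝ)) P :=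
        (integrable_const 1).indicator (hAb.inter hUt)
      have hind2 : Integrable ((U ⁻¹' t).indicator fun _ => (1 : ℝ)) P :=
        (integrable_const 1).indicator hUt
      have hCI := (condIndepFun_iff_condExp_inter_preimage_eq_mul (μ := P)
        (hm' := hX.comap_le) hA hU).mp hNUC {b} t (measurableSet_singleton b) ht
      have hπb : (fun ω => π b (X ω)) =ᵐ[P]
          P[(A ⁻¹' {b}).indicator (fun _ => (1 : ℝ)) | MeasurableSpace.comap X inferInstance] := by
        have he : (fun ω => if A ω = b then (1 : ℝ) else 0)
            = (A ⁻¹' {b}).indicator fun _ => (1 : ℝ) := by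
          funext ω; simp [Set.indicator_apply]
        have h2 := hπ b
        rwa [he] at h2
      have hmul := condExp_stronglyMeasurable_mul_of_bound hm' (hπsm b) hind2 1
        (Filter.Eventually.of_forall (hπnorm b))
      have hprod_int : Integrable
          ((fun ω => π b (X ω)) * (U ⁻¹' t).indicator fun _ => (1 : ℝ)) P :=
        hind2.bdd_mul ((hπsm b).mono hm').aestronglyMeasurable
          (Filter.Eventually.of_forall (hπnorm b))
      have hreal : ∫ ω in S', ((A ⁻¹' {b} ∩ U ⁻¹' t).indicator fun _ => (1 : ℝ)) ω ∂P
          = ∫ ω in S', ((fun ω => π b (X ω)) * (U ⁻¹' t).indicator fun _ => (1 : ℝ)) ω ∂P := by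
        calc ∫ ω in S', ((A ⁻¹' {b} ∩ U ⁻¹' t).indicator fun _ => (1 : ℝ)) ω ∂P
            = ∫ ω in S', (P⟦A ⁻¹' {b} ∩ U ⁻¹' t | MeasurableSpace.comap X inferInstance⟧) ω ∂P :=
              (setIntegral_condExp hm' hind1 hS'm').symm
          _ = ∫ ω in S', ((fun ω => π b (X ω))
                * P⟦U ⁻¹' t | MeasurableSpace.comap X inferInstance⟧) ω ∂P := by
              refine integral_congr_ae (ae_restrict_of_ae ?_)
              exact hCI.trans (hπb.symm.mul Filter.EventuallyEq.rfl)
          _ = ∫ ω in S', (P[(fun ω => π b (X ω)) * (U ⁻¹' t).indicator fun _ => (1 : ℝ) |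
                MeasurableSpace.comap X inferInstance]) ω ∂P :=
              integral_congr_ae (ae_restrict_of_ae hmul.symm)
          _ = ∫ ω in S', ((fun ω => π b (X ω)) * (U ⁻¹' t).indicator fun _ => (1 : ℝ)) ω ∂P :=
              setIntegral_condExp hm' hprod_int hS'm'
      have hL : ∫ ω in S', ((A ⁻¹' {b} ∩ U ⁻¹' t).indicator fun _ => (1 : ℝ)) ω ∂P
          = (P (S' ∩ (A ⁻¹' {b} ∩ U ⁻¹' t))).toReal := by
        rw [setIntegral_indicator (hAb.inter hUt), setIntegral_const, smul_eq_mul, mul_one, measureReal_def]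
      have hR : ∫ ω in S', ((fun ω => π b (X ω)) * (U ⁻¹' t).indicator fun _ => (1 : ℝ)) ω ∂P
          = ∫ ω in S' ∩ U ⁻¹' t, π b (X ω) ∂P := by
        have he : ((fun ω => π b (X ω)) * (U ⁻¹' t).indicator fun _ => (1 : ℝ))
            = (U ⁻¹' t).indicator fun ω => π b (X ω) := by
          funext ω; by_cases h : ω ∈ U ⁻¹' t <;> simp [Set.indicator_apply, h]
        rw [he, setIntegral_indicator hUt]
      have hT : MeasurableSet (X ⁻¹' s ∩ U ⁻¹' t) := (hX hs).inter hUt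
      rw [hν₁_def, hν₂_def, Measure.restrict_apply hT, withDensity_apply _ hT,
        Measure.restrict_restrict hT]
      have hπint : IntegrableOn (fun ω => π b (X ω)) ((X ⁻¹' s ∩ U ⁻¹' t) ∩ S) P := by
        refine Integrable.mono' (integrable_const 1)
          (((hπmeas b).comp hX).aestronglyMeasurable.restrict) ?_
        exact Filter.Eventually.of_forall (hπnorm b)
      have hnn : 0 ≤ᵐ[P.restrict ((X ⁻¹' s ∩ U ⁻¹' t) ∩ S)] fun ω => π b (X ω) :=
        Filter.Eventually.of_forall fun ω => (hπ01 b (X ω)).1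
      have hcoe : ∀ ω, ((dens ω : ℝ≥0) : ℝ≥0∞) = ENNReal.ofReal (π b (X ω)) := fun ω => rfl
      simp_rw [hcoe]
      rw [← ofReal_integral_eq_lintegral_ofReal hπint hnn,
        ← ENNReal.ofReal_toReal (measure_ne_top P ((X ⁻¹' s ∩ U ⁻¹' t) ∩ (S ∩ A ⁻¹' {b})))]
      congr 1
      have hset1 : (X ⁻¹' s ∩ U ⁻¹' t) ∩ (S ∩ A ⁻¹' {b}) = S' ∩ (A ⁻¹' {b} ∩ U ⁻¹' t) := by
        ext ω; simp only [hS'_def, Set.mem_inter_iff]; tauto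
      have hset2 : (X ⁻¹' s ∩ U ⁻¹' t) ∩ S = S' ∩ U ⁻¹' t := by
        ext ω; simp only [hS'_def, Set.mem_inter_iff]; tauto
      rw [hset1, hset2, ← hL, ← hR]
      exact hreal
    -- extend to all of σ(X,U) by a π-system argument
    have hgen : MeasurableSpace.comap (fun ω => (X ω, U ω)) inferInstance
        = MeasurableSpace.generateFrom
        (Set.preimage (fun ω => (X ω, U ω)) '' Set.image2 (· ×ˢ ·)
          {s : Set 𝒳 | MeasurableSet s} {t : Set 𝒰 | MeasurableSet t}) := by
      conv_lhs => rw [show (inferInstance : MeasurableSpace (𝒳 × 𝒰))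
        = MeasurableSpace.generateFrom (Set.image2 (· ×ˢ ·)
          {s : Set 𝒳 | MeasurableSet s} {t : Set 𝒰 | MeasurableSet t}) from generateFrom_prod.symm]
      exact MeasurableSpace.comap_generateFrom
    have hpi : IsPiSystem (Set.preimage (fun ω => (X ω, U ω)) '' Set.image2 (· ×ˢ ·)
        {s : Set 𝒳 | MeasurableSet s} {t : Set 𝒰 | MeasurableSet t}) :=
      isPiSystem_prod.comap _
    have htrim : ν₁.trim hle = ν₂.trim hle := by
      refine ext_of_generate_finite _ hgen hpi ?_ ?_
      · rintro u ⟨v, hv, rfl⟩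
        obtain ⟨s, hs, t, ht, rfl⟩ := hv
        have hv'' : MeasurableSet[MeasurableSpace.comap (fun ω => (X ω, U ω)) inferInstance]
            ((fun ω => (X ω, U ω)) ⁻¹' s ×ˢ t) := ⟨s ×ˢ t, hs.prod ht, rfl⟩
        rw [trim_measurableSet_eq hle hv'', trim_measurableSet_eq hle hv'']
        exact hrect s t hs ht
      · rw [trim_measurableSet_eq hle MeasurableSet.univ,
          trim_measurableSet_eq hle MeasurableSet.univ]
        have h := hrect Set.univ Set.univ MeasurableSet.univ MeasurableSet.univ
        simpa [Set.univ_prod_univ] using h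
    have hint_eq : ∫ ω, g ω ∂ν₁ = ∫ ω, g ω ∂ν₂ := by
      rw [integral_trim hle (μ := ν₁) hgsm'', integral_trim hle (μ := ν₂) hgsm'', htrim]
    calc ∫ ω in S, (if A ω = b then (1 : ℝ) else 0) * g ω ∂P
        = ∫ ω in S, (A ⁻¹' {b}).indicator g ω ∂P := by
          refine integral_congr_ae (Filter.Eventually.of_forall fun ω => ?_)
          by_cases h : A ω = b <;> simp [Set.indicator_apply, h]
      _ = ∫ ω in S ∩ A ⁻¹' {b}, g ω ∂P := setIntegral_indicator hAb
      _ = ∫ ω, g ω ∂ν₁ := by rw [hν₁_def]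
      _ = ∫ ω, g ω ∂ν₂ := hint_eq
      _ = ∫ ω, dens ω • g ω ∂(P.restrict S) := by
          rw [hν₂_def]; exact integral_withDensity_eq_integral_smul hdensm g
      _ = ∫ ω in S, π b (X ω) * g ω ∂P := by
          refine integral_congr_ae (Filter.Eventually.of_forall fun ω => ?_)
          simp only [hdens_def, NNReal.smul_def, smul_eq_mul]
          rw [Real.coe_toNNReal _ (hπ01 b (X ω)).1]
  -- conditional expectation uniqueness
  have hitem : Integrable (fun ω => (if A ω = b then (1 : ℝ) else 0) * g ω) P := by
    refine Integrable.mono' (integrable_const C) ?_ ?_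
    · exact ((Measurable.ite hAb measurable_const measurable_const).mul
        hgmeas).aestronglyMeasurable
    · refine Filter.Eventually.of_forall fun ω => ?_
      by_cases h : A ω = b
      · simpa [h, Real.norm_eq_abs] using hfbdd (X ω) b (U ω)
      · simpa [h] using hC0
  have hmulg := condExp_stronglyMeasurable_mul_of_bound hm' (hπsm b) hgint 1
    (Filter.Eventually.of_forall (hπnorm b))
  have hπg_int : Integrable ((fun ω => π b (X ω)) * g) P :=
    hgint.bdd_mul ((hπsm b).mono hm').aestronglyMeasurable
      (Filter.Eventually.of_forall (hπnorm b))
  have hver : (fun ω => π b (X ω) * (P[g | MeasurableSpace.comap X inferInstance]) ω) =ᵐ[P]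
      P[fun ω => (if A ω = b then (1 : ℝ) else 0) * g ω |
        MeasurableSpace.comap X inferInstance] := by
    refine ae_eq_condExp_of_forall_setIntegral_eq hm' hitem ?_ ?_ ?_
    · intro s _ _
      exact (integrable_condExp.bdd_mul ((hπsm b).mono hm').aestronglyMeasurable
        (Filter.Eventually.of_forall (hπnorm b))).integrableOn
    · intro s hs _
      calc ∫ ω in s, π b (X ω) * (P[g | MeasurableSpace.comap X inferInstance]) ω ∂P
          = ∫ ω in s, (P[(fun ω => π b (X ω)) * g |
              MeasurableSpace.comap X inferInstance]) ω ∂P :=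
            integral_congr_ae (ae_restrict_of_ae hmulg.symm)
        _ = ∫ ω in s, ((fun ω => π b (X ω)) * g) ω ∂P := setIntegral_condExp hm' hπg_int hs
        _ = ∫ ω in s, (if A ω = b then (1 : ℝ) else 0) * g ω ∂P := (key_int s hs).symm
    · exact ((hπsm b).mul stronglyMeasurable_condExp).aestronglyMeasurable
  have hce : P[fun ω => (if A ω = b then (1 : ℝ) else 0) * f (X ω) (A ω) (U ω) |
        MeasurableSpace.comap X inferInstance]
      = P[fun ω => (if A ω = b then (1 : ℝ) else 0) * g ω |
        MeasurableSpace.comap X inferInstance] := by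
    have hfun : (fun ω => (if A ω = b then (1 : ℝ) else 0) * f (X ω) (A ω) (U ω))
        = fun ω => (if A ω = b then (1 : ℝ) else 0) * g ω := by
      funext ω
      by_cases h : A ω = b <;> simp [h, hg_def]
    rw [hfun]
  have hμb : (fun ω => μreg b (X ω) * π b (X ω)) =ᵐ[P]
      P[fun ω => (if A ω = b then (1 : ℝ) else 0) * g ω |
        MeasurableSpace.comap X inferInstance] := by
    have h2 := hμ b
    rwa [hce] at h2
  have hfinal : (fun ω => π b (X ω) * (P[g | MeasurableSpace.comap X inferInstance]) ω) =ᵐ[P]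
      (fun ω => μreg b (X ω) * π b (X ω)) := hver.trans hμb.symm
  filter_upwards [hfinal] with ω hω
  rw [hω, mul_comm]
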